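/- Let S be a real N×N symmetric positive definite matrix. Then Tr(S⁻¹) ≥ ∑_{n=1}^N 1/[S]_{n,n}, and equality holds if and only if S is diagonal. -/

import Mathlib

open Matrix BigOperators

/-- For a real symmetric positive definite matrix S,
Tr(S⁻¹) ≥ ∑ₙ 1/[S]ₙₙ, with equality iff S is diagonal. -/
theorem stmt_1 {N : ℕ} (S : Matrix (Fin N) (Fin N) ℝ) (hS : S.PosDef) :
    Matrix.trace S⁻¹ ≥ ∑ n, 1 / S n n ∧
      (Matrix.trace S⁻¹ = ∑ n, 1 / S n n ↔ ∀ i j, i ≠ j → S i j = 0) := by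
  classical
  have hdet : IsUnit S.det := hS.det_pos.ne'.isUnit
  have hSi : S * S⁻¹ = 1 := Matrix.mul_nonsing_inv S hdet
  have hiS : S⁻¹ * S = 1 := Matrix.nonsing_inv_mul S hdet
  have hST : Sᵀ = S := by
    rw [← Matrix.conjTranspose_eq_transpose_of_trivial]; exact hS.1
  -- symmetry of the bilinear form
  have hsymm : ∀ x y : Fin N → ℝ, x ⬝ᵥ (S *ᵥ y) = (S *ᵥ x) ⬝ᵥ y := by
    intro x y
    rw [Matrix.dotProduct_mulVec, ← Matrix.mulVec_transpose, hST]
  set e : Fin N → Fin N → ℝ := fun n => Pi.single n 1 with he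
  have he_ne : ∀ n, e n ≠ 0 := by
    intro n h
    have := congrFun h n
    simp [he] at this
  have hdiag : ∀ n, 0 < S n n := by
    intro n
    have := hS.dotProduct_mulVec_pos (he_ne n)
    simpa [he, single_dotProduct] using this
  have hdiag' : ∀ n, S n n ≠ 0 := fun n => (hdiag n).ne'
  have hSe : ∀ n, S *ᵥ (S⁻¹ *ᵥ e n) = e n := by
    intro n
    rw [Matrix.mulVec_mulVec, hSi, Matrix.one_mulVec]
  -- the key vector
  set c : Fin N → ℝ := fun n => (S n n)⁻¹ with hc
  set w : Fin N → Fin N → ℝ := fun n => S⁻¹ *ᵥ e n - c n • e n with hw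
  have key : ∀ n, w n ⬝ᵥ (S *ᵥ w n) = S⁻¹ n n - c n := by
    intro n
    have h1 : S *ᵥ w n = e n - c n • (S *ᵥ e n) := by
      rw [hw]; simp only [Matrix.mulVec_sub, Matrix.mulVec_smul, hSe]
    rw [h1, dotProduct_sub, dotProduct_smul]
    have h2 : w n ⬝ᵥ e n = S⁻¹ n n - c n := by
      rw [hw]
      simp [sub_dotProduct, smul_dotProduct, dotProduct_single,
        he, Matrix.mulVec_single]
    have h3 : w n ⬝ᵥ (S *ᵥ e n) = 0 := by
      rw [hsymm, h1]
      simp [sub_dotProduct, smul_dotProduct, he,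
        single_dotProduct, dotProduct_single, Matrix.mulVec_single,
        hc, inv_mul_cancel₀ (hdiag' n)]
    rw [h2, h3, smul_eq_mul, mul_zero, sub_zero]
  have hnonneg : ∀ n, 0 ≤ S⁻¹ n n - c n := by
    intro n
    rw [← key n]
    have := hS.posSemidef.dotProduct_mulVec_nonneg (w n)
    simpa using this
  have htr : Matrix.trace S⁻¹ = ∑ n, S⁻¹ n n := by
    simp [Matrix.trace, Matrix.diag]
  have hcs : ∀ n, (1 : ℝ) / S n n = c n := fun n => one_div _
  have hsum : Matrix.trace S⁻¹ - ∑ n, 1 / S n n = ∑ n, (S⁻¹ n n - c n) := by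
    rw [htr, Finset.sum_sub_distrib]
    congr 1
    exact Finset.sum_congr rfl fun n _ => hcs n
  constructor
  · have : 0 ≤ ∑ n, (S⁻¹ n n - c n) := Finset.sum_nonneg fun n _ => hnonneg n
    linarith [hsum ▸ this, hsum]
  · constructor
    · intro heq
      have hzero : ∑ n, (S⁻¹ n n - c n) = 0 := by rw [← hsum, heq]; ring
      have hall : ∀ n ∈ Finset.univ, S⁻¹ n n - c n = 0 :=
        (Finset.sum_eq_zero_iff_of_nonneg fun n _ => hnonneg n).1 hzero
      have hwz : ∀ n, w n = 0 := by
        intro n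
        by_contra hne
        have := hS.dotProduct_mulVec_pos hne
        rw [show star (w n) = w n from star_trivial _, key n, hall n (Finset.mem_univ n)] at this
        exact lt_irrefl 0 this
      -- columns of S⁻¹ are multiples of basis vectors
      have hinv_off : ∀ i j, i ≠ j → S⁻¹ i j = 0 := by
        intro i j hij
        have := congrFun (hwz j) i
        simp only [hw, Pi.sub_apply, Pi.smul_apply, Pi.zero_apply, sub_eq_zero] at this
        rw [he] at this
        simp only [Matrix.mulVec_single_one, Matrix.col_apply, mul_one] at this
        rw [this]
        simp [Pi.single_apply, hij]
      have hinv_diag : ∀ j, S⁻¹ j j = c j := by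
        intro j
        have := congrFun (hwz j) j
        simp only [hw, Pi.sub_apply, Pi.smul_apply, Pi.zero_apply, sub_eq_zero] at this
        rw [he] at this
        simp only [Matrix.mulVec_single_one, Matrix.col_apply, mul_one] at this
        rw [this]
        simp [Pi.single_apply]
      intro i j hij
      have h1 : (S * S⁻¹) i j = (0 : ℝ) := by rw [hSi]; simp [Matrix.one_apply, hij]
      rw [Matrix.mul_apply] at h1
      have h2 : ∑ k, S i k * S⁻¹ k j = S i j * S⁻¹ j j := by
        apply Finset.sum_eq_single
        · intro k _ hk
          rw [hinv_off k j hk, mul_zero]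
        · intro h; exact absurd (Finset.mem_univ j) h
      rw [h2, hinv_diag j] at h1
      rcases mul_eq_zero.1 h1 with h | h
      · exact h
      · exact absurd h (inv_ne_zero (hdiag' j))
    · intro hd
      -- S diagonal ⇒ each w n = 0 ⇒ equality
      have hwz : ∀ n, w n = 0 := by
        intro n
        have hcol : S *ᵥ (c n • e n) = e n := by
          funext i
          simp only [Matrix.mulVec_smul, Pi.smul_apply, he, Matrix.mulVec_single, mul_one,
            smul_eq_mul]
          rcases eq_or_ne i n with rfl | hin
          · simp [hc, inv_mul_cancel₀ (hdiag' i), Pi.single_apply]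
          · simp [hd i n hin, Pi.single_apply, hin]
        have : S⁻¹ *ᵥ e n = c n • e n := by
          conv_lhs => rw [← hcol]
          rw [Matrix.mulVec_mulVec, hiS, Matrix.one_mulVec]
        rw [hw]
        simp only [this, sub_self]
      have hz : ∀ n, S⁻¹ n n - c n = 0 := by
        intro n
        rw [← key n, hwz n]
        simp
      have : ∑ n, (S⁻¹ n n - c n) = 0 := Finset.sum_eq_zero fun n _ => hz n
      linarith [hsum ▸ this, hsum]
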